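/- arXiv:1206.1369 — 3 statements merged into one kernel-verified Lean document; each statement's English description precedes it below -/
import Mathlib

section
/- Let f : [0,T] → [0,∞) be continuous with f(0) = 0 and suppose f(t) ≤ C·∫₀ᵗ (t-s)^{-1/2} f(s) ds for all t ∈ (0,T], where C ≥ 0. Then f ≡ 0 on [0,T]. -/
open MeasureTheory

lemma sg_kernel_integrable (a b t : ℝ) :
    IntervalIntegrable (fun s => (t - s) ^ (-(1 / 2) : ℝ)) volume a b := by
  have h := (intervalIntegral.intervalIntegrable_rpow' (a := t - a) (b := t - b)
    (by norm_num : (-1 : ℝ) < -(1/2))).comp_sub_left t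
  simpa using h

lemma sg_kernel_integral (a t : ℝ) (h : a ≤ t) :
    (∫ s in a..t, (t - s) ^ (-(1 / 2) : ℝ)) = 2 * (t - a) ^ ((1 / 2) : ℝ) := by
  rw [intervalIntegral.integral_comp_sub_left (fun u => u ^ (-(1/2) : ℝ)) t]
  rw [sub_self, integral_rpow (Or.inl (by norm_num))]
  rw [Real.zero_rpow (by norm_num)]
  norm_num
  ring

lemma sg_key (t a B : ℝ) (f : ℝ → ℝ) (ha : 0 ≤ a) (hat : a < t)
    (hcont : ContinuousOn f (Set.Icc 0 t))
    (hzero : ∀ s ∈ Set.Icc (0 : ℝ) a, f s = 0)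
    (hB : ∀ s ∈ Set.Icc (0 : ℝ) t, f s ≤ B) :
    (∫ s in (0 : ℝ)..t, (t - s) ^ (-(1 / 2) : ℝ) * f s)
      ≤ 2 * (t - a) ^ ((1 / 2) : ℝ) * B := by
  have hat' : a ≤ t := hat.le
  have huIcc1 : Set.uIcc (0 : ℝ) a ⊆ Set.Icc 0 t := by
    rw [Set.uIcc_of_le ha]; exact Set.Icc_subset_Icc le_rfl hat'
  have huIcc2 : Set.uIcc a t ⊆ Set.Icc 0 t := by
    rw [Set.uIcc_of_le hat']; exact Set.Icc_subset_Icc ha le_rfl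
  have hint1 : IntervalIntegrable (fun s => (t - s) ^ (-(1/2) : ℝ) * f s) volume 0 a :=
    (sg_kernel_integrable 0 a t).mul_continuousOn (hcont.mono huIcc1)
  have hint2 : IntervalIntegrable (fun s => (t - s) ^ (-(1/2) : ℝ) * f s) volume a t :=
    (sg_kernel_integrable a t t).mul_continuousOn (hcont.mono huIcc2)
  have hsplit : (∫ s in (0 : ℝ)..t, (t - s) ^ (-(1/2) : ℝ) * f s)
      = (∫ s in (0 : ℝ)..a, (t - s) ^ (-(1/2) : ℝ) * f s)
        + ∫ s in a..t, (t - s) ^ (-(1/2) : ℝ) * f s :=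
    (intervalIntegral.integral_add_adjacent_intervals hint1 hint2).symm
  have hI1 : (∫ s in (0 : ℝ)..a, (t - s) ^ (-(1/2) : ℝ) * f s) = 0 := by
    rw [intervalIntegral.integral_congr (g := fun _ => (0 : ℝ))]
    · simp
    · intro s hs
      rw [Set.uIcc_of_le ha] at hs
      simp [hzero s hs]
  have hI2 : (∫ s in a..t, (t - s) ^ (-(1/2) : ℝ) * f s)
      ≤ ∫ s in a..t, (t - s) ^ (-(1/2) : ℝ) * B := by
    apply intervalIntegral.integral_mono_on hat' hint2
      ((sg_kernel_integrable a t t).mul_const B)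
    intro s hs
    have hk : (0 : ℝ) ≤ (t - s) ^ (-(1/2) : ℝ) :=
      Real.rpow_nonneg (sub_nonneg.2 hs.2) _
    exact mul_le_mul_of_nonneg_left (hB s ⟨le_trans ha hs.1, hs.2⟩) hk
  have hI3 : (∫ s in a..t, (t - s) ^ (-(1/2) : ℝ) * B)
      = 2 * (t - a) ^ ((1/2) : ℝ) * B := by
    rw [intervalIntegral.integral_mul_const, sg_kernel_integral a t hat']
  rw [hsplit, hI1, zero_add]
  rw [← hI3]
  exact hI2

/-- Singular Gronwall inequality with weakly singular kernel (t-s)^{-1/2}. -/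
theorem stmt_6 (T : ℝ) (hT : 0 < T) (f : ℝ → ℝ)
    (hcont : ContinuousOn f (Set.Icc 0 T))
    (hnonneg : ∀ t ∈ Set.Icc (0 : ℝ) T, 0 ≤ f t)
    (hf0 : f 0 = 0) (C : ℝ) (hC : 0 ≤ C)
    (hrec : ∀ t ∈ Set.Ioc (0 : ℝ) T,
      f t ≤ C * ∫ s in (0 : ℝ)..t, (t - s) ^ (-(1 / 2) : ℝ) * f s) :
    ∀ t ∈ Set.Icc (0 : ℝ) T, f t = 0 := by
  set ε : ℝ := 1 / (4 * (C + 1)) with hε_def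
  have hε : 0 < ε := by positivity
  set δ : ℝ := ε ^ 2 with hδ_def
  have hδ : 0 < δ := by positivity
  have hδroot : δ ^ ((1/2) : ℝ) = ε := by
    rw [hδ_def, ← Real.rpow_natCast ε 2, ← Real.rpow_mul hε.le]
    norm_num
  have hCδ : 2 * C * δ ^ ((1/2) : ℝ) ≤ 1 / 2 := by
    rw [hδroot, hε_def, mul_one_div, div_le_div_iff₀ (by positivity) (by norm_num)]
    nlinarith
  have main : ∀ n : ℕ, ∀ t ∈ Set.Icc (0 : ℝ) T, t ≤ n * δ → f t = 0 := by
    intro n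
    induction n with
    | zero =>
      intro t ht htn
      simp only [Nat.cast_zero, zero_mul] at htn
      have : t = 0 := le_antisymm htn ht.1
      rw [this, hf0]
    | succ n ih =>
      intro t ht htn
      set a : ℝ := n * δ with ha_def
      have ha : 0 ≤ a := by positivity
      by_cases hTa : T ≤ a
      · exact ih t ht (le_trans ht.2 hTa)
      push_neg at hTa
      set b : ℝ := min ((n + 1 : ℕ) * δ) T with hb_def
      have hb0 : 0 ≤ b := le_min (by positivity) hT.le
      have hbT : b ≤ T := min_le_right _ _
      have hsub : Set.Icc (0 : ℝ) b ⊆ Set.Icc 0 T := Set.Icc_subset_Icc le_rfl hbT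
      obtain ⟨t₀, ht₀mem, ht₀max⟩ := isCompact_Icc.exists_isMaxOn
        (Set.nonempty_Icc.2 hb0) (hcont.mono hsub)
      have hft₀0 : f t₀ = 0 := by
        by_cases ht₀a : t₀ ≤ a
        · exact ih t₀ (hsub ht₀mem) ht₀a
        push_neg at ht₀a
        have ht₀T : t₀ ≤ T := le_trans ht₀mem.2 hbT
        have ht₀pos : 0 < t₀ := lt_of_le_of_lt ha ht₀a
        have hB : ∀ s ∈ Set.Icc (0 : ℝ) t₀, f s ≤ f t₀ := by
          intro s hs
          exact ht₀max ⟨hs.1, le_trans hs.2 ht₀mem.2⟩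
        have hzero : ∀ s ∈ Set.Icc (0 : ℝ) a, f s = 0 := by
          intro s hs
          exact ih s ⟨hs.1, le_trans hs.2 (le_trans ht₀a.le ht₀T)⟩ hs.2
        have hkey := sg_key t₀ a (f t₀) f ha ht₀a
          (hcont.mono (Set.Icc_subset_Icc le_rfl ht₀T)) hzero hB
        have hrec' := hrec t₀ ⟨ht₀pos, ht₀T⟩
        have hfnn : 0 ≤ f t₀ := hnonneg t₀ ⟨ht₀pos.le, ht₀T⟩
        have hta : t₀ - a ≤ δ := by
          have : t₀ ≤ (n + 1 : ℕ) * δ := le_trans ht₀mem.2 (min_le_left _ _)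
          push_cast at this
          rw [ha_def]
          nlinarith
        have hrpow : (t₀ - a) ^ ((1/2) : ℝ) ≤ δ ^ ((1/2) : ℝ) :=
          Real.rpow_le_rpow (sub_nonneg.2 ht₀a.le) hta (by norm_num)
        have hchain : f t₀ ≤ (2 * C * δ ^ ((1/2) : ℝ)) * f t₀ := by
          calc f t₀ ≤ C * ∫ s in (0:ℝ)..t₀, (t₀ - s) ^ (-(1/2) : ℝ) * f s := hrec'
            _ ≤ C * (2 * (t₀ - a) ^ ((1/2) : ℝ) * f t₀) :=
              mul_le_mul_of_nonneg_left hkey hC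
            _ ≤ C * (2 * δ ^ ((1/2) : ℝ) * f t₀) := by
              apply mul_le_mul_of_nonneg_left _ hC
              apply mul_le_mul_of_nonneg_right _ hfnn
              linarith
            _ = (2 * C * δ ^ ((1/2) : ℝ)) * f t₀ := by ring
        have : f t₀ ≤ (1/2) * f t₀ :=
          le_trans hchain (mul_le_mul_of_nonneg_right hCδ hfnn)
        linarith
      have htb : t ∈ Set.Icc (0 : ℝ) b := ⟨ht.1, le_min htn ht.2⟩
      have h1 : f t ≤ f t₀ := ht₀max htb
      have h2 := hnonneg t ht
      rw [hft₀0] at h1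
      linarith
  intro t ht
  obtain ⟨n, hn⟩ := exists_nat_ge (T / δ)
  exact main n t ht (le_trans ht.2 ((div_le_iff₀ hδ).1 hn))
end

section
/- Let φ₀ : ℝ → (0, ∞) be continuous with φ₀ ≡ 1 on [-1,1], φ₀ increasing on (-∞,-1), decreasing on (1,∞), and such that (1/φ₀(x) - 1)² ≤ P(|x|) for a polynomial P. Let g : ℝ → ℝ satisfy |g(x)| ≤ K e^{-α|x|} for some K, α > 0. Then there exists C_v ≥ 1, independent of a ≥ 0 and L₀ := a + C_v, such that for all shifts τ ∈ [0, a], ∫_ℝ [(1/φ₀(x/L₀) - 1)·g(x - τ)]² dx ≤ 1. -/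
open MeasureTheory

open Set

-- exp(-α|x|) is integrable
lemma aux_integrable_exp_neg_abs {α : ℝ} (hα : 0 < α) :
    Integrable (fun x : ℝ => Real.exp (-α * |x|)) := by
  have hIoi : IntegrableOn (fun x : ℝ => Real.exp (-α * |x|)) (Ioi 0) := by
    refine (exp_neg_integrableOn_Ioi 0 hα).congr_fun ?_ measurableSet_Ioi
    intro x hx
    simp [abs_of_pos (mem_Ioi.mp hx)]
  have hIic : IntegrableOn (fun x : ℝ => Real.exp (-α * |x|)) (Iic 0) := by
    rw [← Measure.map_neg_eq_self (volume : Measure ℝ)]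
    have m : MeasurableEmbedding fun x : ℝ => -x := (Homeomorph.neg ℝ).measurableEmbedding
    rw [m.integrableOn_map_iff]
    simp_rw [Function.comp_def, abs_neg, neg_preimage, neg_Iic, neg_zero]
    exact Iff.mpr integrableOn_Ici_iff_integrableOn_Ioi hIoi
  rw [← integrableOn_univ, ← Set.Iic_union_Ioi (a := (0:ℝ))]
  exact hIic.union hIoi

-- polynomial bounded by exponential
lemma aux_poly_le_exp (P : Polynomial ℝ) {α : ℝ} (hα : 0 < α) :
    ∃ D : ℝ, 0 ≤ D ∧ ∀ y : ℝ, 0 ≤ y → P.eval y ≤ D * Real.exp (α * y) := by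
  refine ⟨∑ i ∈ Finset.range (P.natDegree + 1),
      |P.coeff i| * (Nat.factorial i : ℝ) * α⁻¹ ^ i,
    Finset.sum_nonneg fun i _ => by positivity, fun y hy => ?_⟩
  rw [Polynomial.eval_eq_sum_range, Finset.sum_mul]
  refine Finset.sum_le_sum fun i _ => ?_
  have hay : 0 ≤ α * y := by positivity
  have h1 : (α * y) ^ i / (Nat.factorial i : ℝ) ≤ Real.exp (α * y) := by
    refine le_trans ?_ (Real.sum_le_exp_of_nonneg hay (i + 1))
    exact Finset.single_le_sum (f := fun j => (α * y) ^ j / (Nat.factorial j : ℝ))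
      (fun j _ => by positivity) (Finset.self_mem_range_succ i)
  have hfac : (0:ℝ) < (Nat.factorial i : ℝ) := by positivity
  have h2 : (α * y) ^ i ≤ (Nat.factorial i : ℝ) * Real.exp (α * y) := by
    rw [div_le_iff₀ hfac] at h1; linarith
  have hyi : y ^ i ≤ (Nat.factorial i : ℝ) * α⁻¹ ^ i * Real.exp (α * y) := by
    calc y ^ i = α⁻¹ ^ i * (α * y) ^ i := by
          rw [← mul_pow, inv_mul_cancel_left₀ hα.ne']
      _ ≤ α⁻¹ ^ i * ((Nat.factorial i : ℝ) * Real.exp (α * y)) :=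
          mul_le_mul_of_nonneg_left h2 (by positivity)
      _ = (Nat.factorial i : ℝ) * α⁻¹ ^ i * Real.exp (α * y) := by ring
  calc P.coeff i * y ^ i ≤ |P.coeff i| * y ^ i :=
        mul_le_mul_of_nonneg_right (le_abs_self _) (by positivity)
    _ ≤ |P.coeff i| * ((Nat.factorial i : ℝ) * α⁻¹ ^ i * Real.exp (α * y)) :=
        mul_le_mul_of_nonneg_left hyi (abs_nonneg _)
    _ = |P.coeff i| * (Nat.factorial i : ℝ) * α⁻¹ ^ i * Real.exp (α * y) := by ring

-- integral of the bound
lemma aux_integral_bound {α M L : ℝ} (hα : 0 < α) (hL : 0 < L) (hM : 0 ≤ M) :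
    ∫ x : ℝ, (if L ≤ |x| then M * Real.exp (-α * (|x| - L)) else 0) = 2 * (α⁻¹ * M) := by
  rw [integral_comp_abs (f := fun t => if L ≤ t then M * Real.exp (-α * (t - L)) else 0)]
  have h1 : ∫ x in Ioi (0:ℝ), (if L ≤ x then M * Real.exp (-α * (x - L)) else 0)
      = ∫ x in Ioi L, M * Real.exp (-α * (x - L)) := by
    have : (fun x : ℝ => if L ≤ x then M * Real.exp (-α * (x - L)) else 0)
        = (Ici L).indicator (fun x => M * Real.exp (-α * (x - L))) := by
      funext x; simp [Set.indicator_apply, Set.mem_Ici]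
    have hset : Set.Ioi (0:ℝ) ∩ Set.Ici L = Set.Ici L :=
      Set.inter_eq_self_of_subset_right (fun x hx => lt_of_lt_of_le hL hx)
    rw [this, setIntegral_indicator measurableSet_Ici, hset, integral_Ici_eq_integral_Ioi]
  rw [h1]
  have h2 : ∫ x in Ioi L, M * Real.exp (-α * (x - L))
      = ∫ x in Ioi L, (fun u => M * Real.exp (-(u - α * L))) (α * x) := by
    congr 1; funext x; congr 1; ring_nf
  rw [h2, integral_comp_mul_left_Ioi (fun u => M * Real.exp (-(u - α * L))) L hα]
  have h3 : ∫ u in Ioi (α * L), M * Real.exp (-(u - α * L))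
      = ∫ u in Ioi (α * L), (M * Real.exp (α * L)) * Real.exp (-u) := by
    congr 1; funext u; rw [mul_assoc, ← Real.exp_add]; ring_nf
  rw [h3, integral_const_mul, integral_exp_neg_Ioi, smul_eq_mul]
  rw [mul_assoc, ← Real.exp_add]
  ring_nf
  simp

set_option maxHeartbeats 1000000 in
/-- Uniform smallness of the cutoff error: for φ₀ ≡ 1 on [-1,1], monotone outside,
with (1/φ₀ - 1)² of at most polynomial growth, and g exponentially decaying, there
is C_v ≥ 1 such that for every a ≥ 0, with L₀ = a + C_v, and every shift τ ∈ [0,a],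
∫ ((1/φ₀(x/L₀) - 1) g(x-τ))² dx ≤ 1. -/
theorem stmt_18 (φ₀ : ℝ → ℝ) (hpos : ∀ x, 0 < φ₀ x) (hcont : Continuous φ₀)
    (hone : ∀ x ∈ Set.Icc (-1 : ℝ) 1, φ₀ x = 1)
    (hinc : MonotoneOn φ₀ (Set.Iic (-1 : ℝ)))
    (hdec : AntitoneOn φ₀ (Set.Ici (1 : ℝ)))
    (P : Polynomial ℝ) (hP : ∀ x : ℝ, (1 / φ₀ x - 1) ^ 2 ≤ P.eval |x|)
    (g : ℝ → ℝ) (K α : ℝ) (hK : 0 < K) (hα : 0 < α)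
    (hg : ∀ x : ℝ, |g x| ≤ K * Real.exp (-α * |x|)) :
    ∃ Cv : ℝ, 1 ≤ Cv ∧ ∀ a : ℝ, 0 ≤ a → ∀ τ ∈ Set.Icc (0 : ℝ) a,
      ∫ x : ℝ, ((1 / φ₀ (x / (a + Cv)) - 1) * g (x - τ)) ^ 2 ≤ 1 := by
  obtain ⟨D, hD0, hPD⟩ := aux_poly_le_exp P hα
  set G : ℝ := D * K ^ 2 * Real.exp α with hG
  have hG0 : 0 ≤ G := by positivity
  set E : ℝ := 2 * (G + 1) / α with hE
  have hE0 : 0 < E := by positivity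
  set Cv : ℝ := max 1 (Real.log E / (2 * α)) with hCvdef
  have hCv1 : (1 : ℝ) ≤ Cv := le_max_left _ _
  -- the main numerical smallness
  have hexpE : Real.exp (-(2 * α) * Cv) ≤ E⁻¹ := by
    have h1 : Real.log E ≤ 2 * α * Cv := by
      have h2 : Real.log E / (2 * α) ≤ Cv := le_max_right _ _
      calc Real.log E = 2 * α * (Real.log E / (2 * α)) := by
            field_simp
        _ ≤ 2 * α * Cv := by
            have : (0:ℝ) ≤ 2 * α := by positivity
            exact mul_le_mul_of_nonneg_left h2 this
    have h3 : E ≤ Real.exp (2 * α * Cv) := by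
      rw [← Real.exp_log hE0]; exact Real.exp_le_exp.mpr h1
    rw [neg_mul, Real.exp_neg]
    exact inv_anti₀ hE0 h3
  set M : ℝ := G * Real.exp (-(2 * α) * Cv) with hM
  have hM0 : 0 ≤ M := by positivity
  have hMain : 2 * (α⁻¹ * M) ≤ 1 := by
    have h1 : M ≤ G * E⁻¹ := mul_le_mul_of_nonneg_left hexpE hG0
    have h2 : E⁻¹ = α / (2 * (G + 1)) := by rw [hE, inv_div]
    have h3 : 2 * (α⁻¹ * M) ≤ 2 * (α⁻¹ * (G * (α / (2 * (G + 1))))) := by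
      rw [← h2]
      have : (0:ℝ) ≤ α⁻¹ := by positivity
      nlinarith [mul_le_mul_of_nonneg_left h1 this]
    have h4 : 2 * (α⁻¹ * (G * (α / (2 * (G + 1))))) = G / (G + 1) := by
      field_simp
    rw [h4] at h3
    have h5 : G / (G + 1) ≤ 1 := by
      rw [div_le_one (by linarith)]; linarith
    linarith
  refine ⟨Cv, hCv1, ?_⟩
  intro a ha τ hτ
  obtain ⟨hτ0, hτa⟩ := hτ
  set L : ℝ := a + Cv with hLdef
  have hL1 : (1:ℝ) ≤ L := by simp only [hLdef]; linarith
  have hL0 : (0:ℝ) < L := by linarith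
  set B : ℝ → ℝ := fun x => if L ≤ |x| then M * Real.exp (-α * (|x| - L)) else 0 with hB
  -- pointwise bound
  have hfB : ∀ x : ℝ, ((1 / φ₀ (x / L) - 1) * g (x - τ)) ^ 2 ≤ B x := by
    intro x
    by_cases hx : L ≤ |x|
    · simp only [hB, if_pos hx]
      set s : ℝ := |x| - L with hs
      have hs0 : 0 ≤ s := by simp only [hs]; linarith
      -- bound on cutoff factor
      have hφ : (1 / φ₀ (x / L) - 1) ^ 2 ≤ D * Real.exp (α * (1 + s)) := by
        calc (1 / φ₀ (x / L) - 1) ^ 2 ≤ P.eval |x / L| := hP _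
          _ = P.eval (|x| / L) := by rw [abs_div, abs_of_pos hL0]
          _ ≤ D * Real.exp (α * (|x| / L)) := hPD _ (by positivity)
          _ ≤ D * Real.exp (α * (1 + s)) := by
              have hdiv : |x| / L ≤ 1 + s := by
                rw [div_le_iff₀ hL0]
                have : L * s ≥ 1 * s := mul_le_mul_of_nonneg_right hL1 hs0
                nlinarith
              have : α * (|x| / L) ≤ α * (1 + s) :=
                mul_le_mul_of_nonneg_left hdiv hα.le
              exact mul_le_mul_of_nonneg_left (Real.exp_le_exp.mpr this) hD0
      -- bound on g factor
      have habs : s + Cv ≤ |x - τ| := by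
        have h1 : |x| - |τ| ≤ |x - τ| := abs_sub_abs_le_abs_sub x τ
        have h2 : |τ| = τ := abs_of_nonneg hτ0
        have : |x| = s + L := by simp [hs]
        rw [h2] at h1
        simp only [hLdef] at this
        linarith
      have hgb : (g (x - τ)) ^ 2 ≤ K ^ 2 * Real.exp (-(2 * α) * (s + Cv)) := by
        have h2 : |g (x - τ)| ≤ K * Real.exp (-α * |x - τ|) := hg _
        calc (g (x - τ)) ^ 2 = |g (x - τ)| ^ 2 := (sq_abs _).symm
          _ ≤ (K * Real.exp (-α * |x - τ|)) ^ 2 :=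
              pow_le_pow_left₀ (abs_nonneg _) h2 2
          _ = K ^ 2 * Real.exp (-(2 * α) * |x - τ|) := by
              rw [mul_pow, pow_two (Real.exp _), ← Real.exp_add]
              congr 1; ring
          _ ≤ K ^ 2 * Real.exp (-(2 * α) * (s + Cv)) := by
              have : -(2 * α) * |x - τ| ≤ -(2 * α) * (s + Cv) := by nlinarith
              exact mul_le_mul_of_nonneg_left (Real.exp_le_exp.mpr this) (by positivity)
      calc ((1 / φ₀ (x / L) - 1) * g (x - τ)) ^ 2
          = (1 / φ₀ (x / L) - 1) ^ 2 * (g (x - τ)) ^ 2 := by ring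
        _ ≤ (D * Real.exp (α * (1 + s))) * (K ^ 2 * Real.exp (-(2 * α) * (s + Cv))) := by
            exact mul_le_mul hφ hgb (sq_nonneg _) (by positivity)
        _ = M * Real.exp (-α * s) := by
            have hexpeq : Real.exp (α * (1 + s)) * Real.exp (-(2 * α) * (s + Cv))
                = Real.exp α * (Real.exp (-(2 * α) * Cv) * Real.exp (-α * s)) := by
              rw [← Real.exp_add, ← Real.exp_add, ← Real.exp_add]
              congr 1; ring
            calc (D * Real.exp (α * (1 + s))) * (K ^ 2 * Real.exp (-(2 * α) * (s + Cv)))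
                = (D * K ^ 2) * (Real.exp (α * (1 + s)) * Real.exp (-(2 * α) * (s + Cv))) := by
                  ring
              _ = M * Real.exp (-α * s) := by rw [hexpeq, hM, hG]; ring
    · simp only [hB, if_neg hx]
      push_neg at hx
      have hmem : x / L ∈ Set.Icc (-1 : ℝ) 1 := by
        constructor
        · rw [le_div_iff₀ hL0]
          have := neg_abs_le x
          nlinarith
        · rw [div_le_one hL0]
          have := le_abs_self x
          linarith
      rw [hone _ hmem]
      norm_num
  -- integrability of the bound
  have hBmeas : Measurable B := by
    apply Measurable.ite
    · exact measurableSet_le measurable_const measurable_abs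
    · have hc : Continuous fun x : ℝ => M * Real.exp (-α * (|x| - L)) :=
        continuous_const.mul (Real.continuous_exp.comp
          (continuous_const.mul (continuous_abs.sub continuous_const)))
      exact hc.measurable
    · exact measurable_const
  have hBint : Integrable B := by
    refine (Integrable.const_mul (aux_integrable_exp_neg_abs hα) (M * Real.exp (α * L))).mono'
      hBmeas.aestronglyMeasurable (Filter.Eventually.of_forall fun x => ?_)
    simp only [hB]
    by_cases hx : L ≤ |x|
    · rw [if_pos hx, Real.norm_eq_abs, abs_of_nonneg (by positivity)]
      have hee : Real.exp (-α * (|x| - L)) = Real.exp (α * L) * Real.exp (-α * |x|) := by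
        rw [← Real.exp_add]; congr 1; ring
      rw [hee, ← mul_assoc]
    · rw [if_neg hx]
      simp only [norm_zero]
      positivity
  -- conclusion
  have hle : ∫ x : ℝ, ((1 / φ₀ (x / L) - 1) * g (x - τ)) ^ 2 ≤ ∫ x : ℝ, B x :=
    integral_mono_of_nonneg (Filter.Eventually.of_forall fun x => sq_nonneg _) hBint
      (Filter.Eventually.of_forall hfB)
  have hBval : ∫ x : ℝ, B x = 2 * (α⁻¹ * M) := aux_integral_bound hα hL0 hM0
  calc ∫ x : ℝ, ((1 / φ₀ (x / (a + Cv)) - 1) * g (x - τ)) ^ 2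
      = ∫ x : ℝ, ((1 / φ₀ (x / L) - 1) * g (x - τ)) ^ 2 := rfl
    _ ≤ ∫ x : ℝ, B x := hle
    _ = 2 * (α⁻¹ * M) := hBval
    _ ≤ 1 := hMain
end

section
/- Let f_t(ξ), t ∈ [0,T], be a family of functions with sup_{t∈[0,T]} ∫ (1+ξ²)^m |f_t(ξ)|² dξ < ∞ for every m ≥ 0, and let ψ : ℝ → ℂ be continuous, nonvanishing, with ψ(0) = 1 and 1/|ψ(ξ)| ≤ P(|ξ|) for a polynomial P. Then ∫ |ψ(l ξ)|^{-2} |f_t(ξ)|² dξ → ∫ |f_t(ξ)|² dξ as l → 0+, uniformly in t ∈ [0,T]. -/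
open MeasureTheory

lemma poly_bound_aux (P : Polynomial ℝ) (s : ℝ) (hs : 0 ≤ s) :
    P.eval s ≤ (∑ i ∈ Finset.range (P.natDegree + 1), |P.coeff i|) * (1 + s) ^ P.natDegree := by
  rw [Polynomial.eval_eq_sum_range, Finset.sum_mul]
  apply Finset.sum_le_sum
  intro i hi
  calc P.coeff i * s ^ i ≤ |P.coeff i| * s ^ i :=
        mul_le_mul_of_nonneg_right (le_abs_self _) (pow_nonneg hs i)
    _ ≤ |P.coeff i| * (1 + s) ^ P.natDegree := by
        apply mul_le_mul_of_nonneg_left _ (abs_nonneg _)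
        calc s ^ i ≤ (1 + s) ^ i := pow_le_pow_left₀ hs (by linarith) i
          _ ≤ (1 + s) ^ P.natDegree :=
            pow_le_pow_right₀ (by linarith) (Finset.mem_range_succ_iff.mp hi)

set_option maxHeartbeats 1000000 in
/-- Removing the correlation factor ψ(lξ) in a weighted L² norm as l → 0⁺,
uniformly in t ∈ [0,T], for a family f_t with all polynomially weighted L² norms
uniformly bounded and ψ continuous, nonvanishing, ψ(0) = 1, with 1/|ψ| of at most
polynomial growth. -/
theorem stmt_19 (T : ℝ) (hT : 0 ≤ T) (f : ℝ → ℝ → ℂ)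
    (hf : ∀ m : ℕ, ∃ B : ℝ, ∀ t ∈ Set.Icc (0 : ℝ) T,
      Integrable (fun ξ : ℝ => (1 + ξ ^ 2) ^ m * ‖f t ξ‖ ^ 2) ∧
      ∫ ξ : ℝ, (1 + ξ ^ 2) ^ m * ‖f t ξ‖ ^ 2 ≤ B)
    (ψ : ℝ → ℂ) (hψcont : Continuous ψ) (hψne : ∀ ξ, ψ ξ ≠ 0) (hψ0 : ψ 0 = 1)
    (P : Polynomial ℝ) (hP : ∀ ξ : ℝ, 1 / ‖ψ ξ‖ ≤ P.eval |ξ|) :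
    ∀ ε : ℝ, 0 < ε → ∃ δ : ℝ, 0 < δ ∧ ∀ l : ℝ, 0 < l → l < δ →
      ∀ t ∈ Set.Icc (0 : ℝ) T,
        |(∫ ξ : ℝ, (‖ψ (l * ξ)‖ ^ 2)⁻¹ * ‖f t ξ‖ ^ 2) - ∫ ξ : ℝ, ‖f t ξ‖ ^ 2| ≤ ε := by
  intro ε hε
  obtain ⟨B₀, hB0⟩ := hf 0
  set n := P.natDegree with hn
  obtain ⟨B, hB⟩ := hf (n + 1)
  have h0T : (0 : ℝ) ∈ Set.Icc (0 : ℝ) T := ⟨le_refl 0, hT⟩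
  have hB0nn : 0 ≤ B₀ :=
    le_trans (integral_nonneg (fun ξ => by positivity)) (hB0 0 h0T).2
  have hBnn : 0 ≤ B :=
    le_trans (integral_nonneg (fun ξ => by positivity)) (hB 0 h0T).2
  set C : ℝ := ∑ i ∈ Finset.range (n + 1), |P.coeff i| with hC
  set K : ℝ := C ^ 2 * 2 ^ n with hK
  have hKnn : 0 ≤ K := by positivity
  set w : ℝ → ℝ := fun u => (‖ψ u‖ ^ 2)⁻¹ with hwdef
  have hψn : ∀ u, (0:ℝ) < ‖ψ u‖ := fun u => norm_pos_iff.mpr (hψne u)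
  have hwpos : ∀ u, 0 < w u := fun u => by
    have := hψn u; simp only [hwdef]; positivity
  have hwcont : Continuous w := by
    apply Continuous.inv₀ (by fun_prop)
    intro u; have := hψn u; positivity
  have hw0 : w 0 = 1 := by simp [hwdef, hψ0]
  have honen : ∀ ξ : ℝ, (1:ℝ) ≤ 1 + ξ ^ 2 := fun ξ => by nlinarith [sq_nonneg ξ]
  have hpowpos : ∀ ξ : ℝ, ∀ m : ℕ, (0:ℝ) < (1 + ξ ^ 2) ^ m := fun ξ m =>
    pow_pos (by nlinarith [sq_nonneg ξ]) m
  have hpow1 : ∀ ξ : ℝ, ∀ m : ℕ, (1:ℝ) ≤ (1 + ξ ^ 2) ^ m := fun ξ m =>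
    one_le_pow₀ (honen ξ)
  -- uniform polynomial bound for w (l * ξ), l ∈ (0,1]
  have hwbound : ∀ l ξ : ℝ, 0 ≤ l → l ≤ 1 → w (l * ξ) ≤ K * (1 + ξ ^ 2) ^ n := by
    intro l ξ hl0 hl1
    have h1 : 1 / ‖ψ (l * ξ)‖ ≤ P.eval |l * ξ| := hP _
    have h2 : P.eval |l * ξ| ≤ C * (1 + |l * ξ|) ^ n := poly_bound_aux P _ (abs_nonneg _)
    have hls : |l * ξ| ≤ |ξ| := by
      rw [abs_mul]
      calc |l| * |ξ| ≤ 1 * |ξ| :=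
            mul_le_mul_of_nonneg_right (abs_le.mpr ⟨by linarith, hl1⟩) (abs_nonneg ξ)
        _ = |ξ| := one_mul _
    have h3 : C * (1 + |l * ξ|) ^ n ≤ C * (1 + |ξ|) ^ n := by
      apply mul_le_mul_of_nonneg_left _ (by positivity)
      exact pow_le_pow_left₀ (by positivity) (by linarith) n
    have h4 : 1 / ‖ψ (l * ξ)‖ ≤ C * (1 + |ξ|) ^ n := le_trans h1 (le_trans h2 h3)
    have h5 : (0:ℝ) < 1 / ‖ψ (l * ξ)‖ := by have := hψn (l * ξ); positivity
    have h6 : w (l * ξ) = (1 / ‖ψ (l * ξ)‖) ^ 2 := by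
      simp only [hwdef, one_div, inv_pow]
    rw [h6]
    calc (1 / ‖ψ (l * ξ)‖) ^ 2 ≤ (C * (1 + |ξ|) ^ n) ^ 2 :=
          pow_le_pow_left₀ h5.le h4 2
      _ = C ^ 2 * ((1 + |ξ|) ^ 2) ^ n := by rw [mul_pow, ← pow_mul, ← pow_mul, Nat.mul_comm]
      _ ≤ C ^ 2 * (2 * (1 + ξ ^ 2)) ^ n := by
          apply mul_le_mul_of_nonneg_left _ (by positivity)
          apply pow_le_pow_left₀ (by positivity)
          nlinarith [sq_abs ξ, sq_nonneg (|ξ| - 1)]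
      _ = K * (1 + ξ ^ 2) ^ n := by rw [hK, mul_pow]; ring
  -- continuity at 0
  set ε₀ : ℝ := ε / (2 * (B₀ + 1)) with hε₀def
  have hε₀pos : 0 < ε₀ := by positivity
  obtain ⟨η, hηpos, hη⟩ : ∃ η > 0, ∀ u : ℝ, |u| < η → |w u - 1| < ε₀ := by
    obtain ⟨η, hηpos, hη⟩ := Metric.continuousAt_iff.mp (hwcont.continuousAt (x := 0)) ε₀ hε₀pos
    refine ⟨η, hηpos, fun u hu => ?_⟩
    have := hη (show dist u 0 < η by simpa [Real.dist_eq] using hu)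
    simpa [Real.dist_eq, hw0] using this
  set R : ℝ := Real.sqrt (2 * (K + 1) * (B + 1) / ε) with hRdef
  have hRnn : 0 ≤ R := Real.sqrt_nonneg _
  have hRsq : R ^ 2 = 2 * (K + 1) * (B + 1) / ε := Real.sq_sqrt (by positivity)
  have hR2pos : 0 < R ^ 2 := by rw [hRsq]; positivity
  refine ⟨min 1 (η / (R + 1)), lt_min one_pos (by positivity), ?_⟩
  intro l hl hlδ t ht
  have hl1 : l ≤ 1 := le_of_lt (lt_of_lt_of_le hlδ (min_le_left _ _))
  obtain ⟨hgInt0, hgB0⟩ := hB0 t ht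
  obtain ⟨hgIntn, hgBn⟩ := hB t ht
  simp only [pow_zero, one_mul] at hgInt0 hgB0
  set g : ℝ → ℝ := fun ξ => ‖f t ξ‖ ^ 2 with hgdef
  have hgnn : ∀ ξ, 0 ≤ g ξ := fun ξ => sq_nonneg _
  have hwl : Continuous fun ξ : ℝ => w (l * ξ) :=
    hwcont.comp (continuous_const.mul continuous_id)
  -- integrability of w(l·) * g
  have hdom : ∀ ξ : ℝ, w (l * ξ) * g ξ ≤ (K + 1) * ((1 + ξ ^ 2) ^ (n + 1) * g ξ) := by
    intro ξ
    have h1 := hwbound l ξ hl.le hl1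
    have h2 := hgnn ξ
    have h3 := (hpowpos ξ n).le
    have h4 : K * (1 + ξ ^ 2) ^ n ≤ (K + 1) * (1 + ξ ^ 2) ^ (n + 1) := by
      apply mul_le_mul (by linarith) _ h3 (by linarith)
      exact pow_le_pow_right₀ (honen ξ) (Nat.le_succ n)
    calc w (l * ξ) * g ξ ≤ K * (1 + ξ ^ 2) ^ n * g ξ := mul_le_mul_of_nonneg_right h1 h2
      _ ≤ (K + 1) * (1 + ξ ^ 2) ^ (n + 1) * g ξ := mul_le_mul_of_nonneg_right h4 h2
      _ = (K + 1) * ((1 + ξ ^ 2) ^ (n + 1) * g ξ) := by ring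
  have hwgInt : Integrable (fun ξ : ℝ => w (l * ξ) * g ξ) := by
    apply Integrable.mono (hgIntn.const_mul (K + 1))
      (hwl.aestronglyMeasurable.mul hgInt0.aestronglyMeasurable)
    filter_upwards with ξ
    simp only [Pi.mul_apply, Real.norm_eq_abs]
    rw [abs_of_nonneg (mul_nonneg (hwpos _).le (hgnn ξ)),
      abs_of_nonneg (mul_nonneg (by linarith : (0:ℝ) ≤ K + 1)
        (mul_nonneg (hpowpos ξ _).le (hgnn ξ)))]
    exact hdom ξ
  set h : ℝ → ℝ := fun ξ => w (l * ξ) * g ξ - g ξ with hhdef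
  have hhInt : Integrable h := hwgInt.sub hgInt0
  have habs : Integrable (fun ξ => |h ξ|) := hhInt.abs
  have key : (∫ ξ : ℝ, w (l * ξ) * g ξ) - ∫ ξ : ℝ, g ξ = ∫ ξ : ℝ, h ξ :=
    (integral_sub hwgInt hgInt0).symm
  show |(∫ ξ : ℝ, w (l * ξ) * g ξ) - ∫ ξ : ℝ, g ξ| ≤ ε
  rw [key]
  have hsplit : (∫ ξ : ℝ, |h ξ|) =
      (∫ ξ in Set.Icc (-R) R, |h ξ|) + ∫ ξ in (Set.Icc (-R) R)ᶜ, |h ξ| :=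
    (integral_add_compl measurableSet_Icc habs).symm
  -- near part
  have hnear : (∫ ξ in Set.Icc (-R) R, |h ξ|) ≤ ε / 2 := by
    have hptw : ∀ ξ ∈ Set.Icc (-R) R, |h ξ| ≤ ε₀ * g ξ := by
      intro ξ hξ
      have hξR : |ξ| ≤ R := abs_le.mpr ⟨hξ.1, hξ.2⟩
      have hlη : l < η / (R + 1) := lt_of_lt_of_le hlδ (min_le_right _ _)
      have hsmall : |l * ξ| < η := by
        rw [abs_mul, abs_of_pos hl]
        calc l * |ξ| ≤ l * (R + 1) := by nlinarith
          _ < (η / (R + 1)) * (R + 1) := by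
              apply mul_lt_mul_of_pos_right hlη (by positivity)
          _ = η := div_mul_cancel₀ η (by positivity)
      have hwη := hη _ hsmall
      have hhξ : |h ξ| = |w (l * ξ) - 1| * g ξ := by
        simp only [hhdef]
        rw [show w (l * ξ) * g ξ - g ξ = (w (l * ξ) - 1) * g ξ by ring, abs_mul,
          abs_of_nonneg (hgnn ξ)]
      rw [hhξ]
      exact mul_le_mul_of_nonneg_right hwη.le (hgnn ξ)
    calc (∫ ξ in Set.Icc (-R) R, |h ξ|) ≤ ∫ ξ in Set.Icc (-R) R, ε₀ * g ξ :=
          setIntegral_mono_on habs.integrableOn (hgInt0.const_mul ε₀).integrableOn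
            measurableSet_Icc hptw
      _ ≤ ∫ ξ : ℝ, ε₀ * g ξ :=
          setIntegral_le_integral (hgInt0.const_mul ε₀)
            (Filter.Eventually.of_forall fun ξ => mul_nonneg hε₀pos.le (hgnn ξ))
      _ = ε₀ * ∫ ξ : ℝ, g ξ := integral_const_mul ε₀ g
      _ ≤ ε₀ * B₀ := mul_le_mul_of_nonneg_left hgB0 hε₀pos.le
      _ ≤ ε / 2 := by
          have h2 : ε₀ * (2 * (B₀ + 1)) = ε := by
            rw [hε₀def]; field_simp
          nlinarith [hε₀pos.le, hB0nn]
  -- far part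
  have hfar : (∫ ξ in (Set.Icc (-R) R)ᶜ, |h ξ|) ≤ ε / 2 := by
    set c : ℝ := (K + 1) / (1 + R ^ 2) with hcdef
    have hcpos : 0 < c := by positivity
    have hptw : ∀ ξ ∈ (Set.Icc (-R) R)ᶜ, |h ξ| ≤ c * ((1 + ξ ^ 2) ^ (n + 1) * g ξ) := by
      intro ξ hξ
      have hξR : R < |ξ| := by
        simp only [Set.mem_compl_iff, Set.mem_Icc, not_and_or, not_le] at hξ
        rcases hξ with h' | h'
        · exact lt_abs.mpr (Or.inr (by linarith))
        · exact lt_abs.mpr (Or.inl h')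
      have hR2 : 1 + R ^ 2 ≤ 1 + ξ ^ 2 := by nlinarith [sq_abs ξ, abs_nonneg ξ]
      have h1 : |h ξ| ≤ (w (l * ξ) + 1) * g ξ := by
        have hhξ : |h ξ| = |w (l * ξ) - 1| * g ξ := by
          simp only [hhdef]
          rw [show w (l * ξ) * g ξ - g ξ = (w (l * ξ) - 1) * g ξ by ring, abs_mul,
            abs_of_nonneg (hgnn ξ)]
        rw [hhξ]
        apply mul_le_mul_of_nonneg_right _ (hgnn ξ)
        have := (hwpos (l * ξ)).le
        exact abs_le.mpr ⟨by linarith, by linarith⟩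
      have h2 : w (l * ξ) + 1 ≤ (K + 1) * (1 + ξ ^ 2) ^ n := by
        have hb := hwbound l ξ hl.le hl1
        have h1n := hpow1 ξ n
        nlinarith
      have h3 : (K + 1) * (1 + ξ ^ 2) ^ n ≤ c * (1 + ξ ^ 2) ^ (n + 1) := by
        rw [hcdef, pow_succ, div_mul_eq_mul_div, le_div_iff₀ (by positivity)]
        have hpn := (hpowpos ξ n).le
        calc (K + 1) * (1 + ξ ^ 2) ^ n * (1 + R ^ 2)
            = (K + 1) * (1 + ξ ^ 2) ^ n * (1 + R ^ 2) := rfl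
          _ ≤ (K + 1) * (1 + ξ ^ 2) ^ n * (1 + ξ ^ 2) :=
              mul_le_mul_of_nonneg_left hR2
                (mul_nonneg (by linarith : (0:ℝ) ≤ K + 1) hpn)
          _ = (K + 1) * ((1 + ξ ^ 2) ^ n * (1 + ξ ^ 2)) := by ring
      calc |h ξ| ≤ (w (l * ξ) + 1) * g ξ := h1
        _ ≤ (K + 1) * (1 + ξ ^ 2) ^ n * g ξ := mul_le_mul_of_nonneg_right h2 (hgnn ξ)
        _ ≤ c * (1 + ξ ^ 2) ^ (n + 1) * g ξ := mul_le_mul_of_nonneg_right h3 (hgnn ξ)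
        _ = c * ((1 + ξ ^ 2) ^ (n + 1) * g ξ) := by ring
    calc (∫ ξ in (Set.Icc (-R) R)ᶜ, |h ξ|)
        ≤ ∫ ξ in (Set.Icc (-R) R)ᶜ, c * ((1 + ξ ^ 2) ^ (n + 1) * g ξ) :=
          setIntegral_mono_on habs.integrableOn (hgIntn.const_mul c).integrableOn
            measurableSet_Icc.compl hptw
      _ ≤ ∫ ξ : ℝ, c * ((1 + ξ ^ 2) ^ (n + 1) * g ξ) :=
          setIntegral_le_integral (hgIntn.const_mul c)
            (Filter.Eventually.of_forall fun ξ =>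
              mul_nonneg hcpos.le (mul_nonneg (hpowpos ξ _).le (hgnn ξ)))
      _ = c * ∫ ξ : ℝ, (1 + ξ ^ 2) ^ (n + 1) * g ξ := integral_const_mul c _
      _ ≤ c * B := mul_le_mul_of_nonneg_left hgBn hcpos.le
      _ ≤ ε / 2 := by
          have hK1 : (0:ℝ) < K + 1 := by linarith
          have hB1 : (0:ℝ) < B + 1 := by linarith
          have heq : (K + 1) * (B + 1) / R ^ 2 = ε / 2 := by
            rw [hRsq]
            field_simp
          have h1 : c * B ≤ (K + 1) * (B + 1) / R ^ 2 := by
            rw [hcdef, div_mul_eq_mul_div, div_le_div_iff₀ (by positivity) hR2pos]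
            nlinarith
          linarith [heq ▸ h1]
  calc |∫ ξ : ℝ, h ξ| ≤ ∫ ξ : ℝ, |h ξ| := by
        simpa [Real.norm_eq_abs] using norm_integral_le_integral_norm h
    _ = _ + _ := hsplit
    _ ≤ ε / 2 + ε / 2 := add_le_add hnear hfar
    _ = ε := by ring
end
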